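/- One has δ_1(0) = δ_1(1) = 1/2, and the sequence (δ_1(i))_{i ≥ 0} is non-increasing: δ_1(i+1) ≤ δ_1(i) for all i ≥ 0. -/

import Mathlib

/-- `pp i` is the `i`-th prime (`pp 0 = 2`, `pp 1 = 3`, `pp 2 = 5`, ...). -/
noncomputable def pp (i : ℕ) : ℕ := Nat.nth Nat.Prime i

/-- `PP i = p₀ · p₁ ⋯ p_i`, the product of the first `i+1` primes. -/
noncomputable def PP (i : ℕ) : ℕ := ∏ j ∈ Finset.range (i + 1), pp j

/-- `del r i` is the density `δ_r(i)` of positive integers having exactly `r`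
prime divisors among `p₀, ..., p_i`: the proportion of `x ∈ {1, ..., PP i}`
divisible by exactly `r` of the primes `p₀, ..., p_i`. -/
noncomputable def del (r i : ℕ) : ℚ :=
  (((Finset.Icc 1 (PP i)).filter
      (fun x => ((Finset.range (i + 1)).filter (fun j => pp j ∣ x)).card = r)).card : ℚ) /
    (PP i : ℚ)

/-- `dd k i` is the density `d_k(p_i)` of positive integers whose `k`-th smallest
prime factor is `p_i`: the proportion of `x ∈ {1, ..., PP i}` divisible by `p_i`
and by exactly `k-1` of the primes `p₀, ..., p_{i-1}`. -/
noncomputable def dd (k i : ℕ) : ℚ :=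
  (((Finset.Icc 1 (PP i)).filter
      (fun x => pp i ∣ x ∧
        ((Finset.range i).filter (fun j => pp j ∣ x)).card = k - 1)).card : ℚ) /
    (PP i : ℚ)

open Finset

lemma pp_prime (i : ℕ) : (pp i).Prime := Nat.prime_nth_prime i

lemma pp_pos (i : ℕ) : 0 < pp i := (pp_prime i).pos

lemma pp_injective : Function.Injective pp :=
  Nat.nth_injective Nat.infinite_setOf_prime

lemma pp_zero : pp 0 = 2 := by
  have := Nat.nth_count (p := Nat.Prime) (n := 2) (by norm_num)
  simpa [pp, Nat.count_succ] using this

lemma pp_one : pp 1 = 3 := by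
  have := Nat.nth_count (p := Nat.Prime) (n := 3) (by norm_num)
  simpa [pp, Nat.count_succ] using this

lemma PP_pos (i : ℕ) : 0 < PP i := Finset.prod_pos fun j _ => pp_pos j

lemma PP_succ (i : ℕ) : PP (i + 1) = PP i * pp (i + 1) := by
  simp [PP, Finset.prod_range_succ]

lemma PP_zero : PP 0 = 2 := by simp [PP, pp_zero]

lemma pp_dvd_PP {j i : ℕ} (h : j ∈ Finset.range (i + 1)) : pp j ∣ PP i :=
  Finset.dvd_prod_of_mem _ h

lemma not_pp_succ_dvd_PP (i : ℕ) : ¬ pp (i + 1) ∣ PP i := by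
  intro h
  obtain ⟨j, hj, hdvd⟩ := (Prime.dvd_finset_prod_iff (pp_prime (i+1)).prime _).1 h
  have := (Nat.prime_dvd_prime_iff_eq (pp_prime (i+1)) (pp_prime j)).1 hdvd
  have := pp_injective this
  simp at hj
  omega

lemma sum_range_mul {M : Type*} [AddCommMonoid M] (m n : ℕ) (f : ℕ → M) :
    ∑ x ∈ range (m*n), f x = ∑ t ∈ range n, ∑ a ∈ range m, f (m*t + a) := by
  induction n with
  | zero => simp
  | succ n ih =>
    rw [Nat.mul_succ, Finset.range_add, Finset.sum_union (by
      simp [Finset.disjoint_left, addLeftEmbedding]; omega), ih, Finset.sum_range_succ,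
      Finset.sum_map]
    simp [addLeftEmbedding, mul_comm, add_comm]

lemma count_dvd {q : ℕ} (hq : q.Prime) (m a : ℕ) (hm : ¬ q ∣ m) :
    ((range q).filter (fun t => q ∣ m * t + a)).card = 1 := by
  haveI : Fact q.Prime := ⟨hq⟩
  have hm0 : (m : ZMod q) ≠ 0 := by
    rwa [Ne, ZMod.natCast_eq_zero_iff]
  set u : ZMod q := (-(a : ZMod q)) * (m : ZMod q)⁻¹ with hu
  have key : ∀ t : ℕ, (q ∣ m * t + a) ↔ ((t : ZMod q) = u) := by
    intro t
    rw [← ZMod.natCast_eq_zero_iff]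
    push_cast
    constructor
    · intro h
      have h2 : (m : ZMod q) * t = -(a : ZMod q) := by linear_combination h
      rw [hu]
      field_simp
      linear_combination h2
    · intro h
      rw [h, hu]
      field_simp
      ring
  rw [Finset.card_eq_one]
  refine ⟨u.val, ?_⟩
  ext t
  simp only [Finset.mem_filter, Finset.mem_range, Finset.mem_singleton, key]
  constructor
  · rintro ⟨ht, h⟩
    rw [← h, ZMod.val_cast_of_lt ht]
  · rintro rfl
    exact ⟨ZMod.val_lt u, by rw [ZMod.natCast_val, ZMod.cast_id]⟩

lemma count_not_dvd {q : ℕ} (hq : q.Prime) (m a : ℕ) (hm : ¬ q ∣ m) :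
    ((range q).filter (fun t => ¬ q ∣ m * t + a)).card = q - 1 := by
  have h1 := count_dvd hq m a hm
  have := Finset.card_filter_add_card_filter_not
    (s := range q) (p := fun t => q ∣ m * t + a)
  simp only [Finset.card_range] at this
  omega

/-- `M r i`: count over `range (PP i)` instead of `Icc 1 (PP i)`. -/
noncomputable def Mc (r i : ℕ) : ℕ :=
  ((range (PP i)).filter
      (fun x => ((range (i + 1)).filter (fun j => pp j ∣ x)).card = r)).card

/-- The inner divisor-count only depends on `x` mod `PP i`. -/
lemma N_eq_M (r i : ℕ) :
    ((Finset.Icc 1 (PP i)).filter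
      (fun x => ((range (i + 1)).filter (fun j => pp j ∣ x)).card = r)).card = Mc r i := by
  classical
  set p : ℕ → Prop := fun x => ((range (i + 1)).filter (fun j => pp j ∣ x)).card = r with hp
  have hP := PP_pos i
  have hiff : p (PP i) ↔ p 0 := by
    have : ((range (i + 1)).filter (fun j => pp j ∣ PP i))
        = ((range (i + 1)).filter (fun j => pp j ∣ 0)) := by
      apply Finset.filter_congr
      intro j hj
      simp [pp_dvd_PP hj]
    simp only [hp, this]
  have h1 : Finset.Icc 1 (PP i) = insert (PP i) (Finset.Ico 1 (PP i)) :=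
    (Finset.Ico_insert_right (by omega)).symm
  have h2 : range (PP i) = insert 0 (Finset.Ico 1 (PP i)) := by
    rw [Finset.range_eq_Ico, ← Finset.Ioo_insert_left hP, ← Finset.Ico_add_one_left_eq_Ioo, zero_add]
  rw [Mc, h1, h2, Finset.filter_insert, Finset.filter_insert]
  by_cases h : p (PP i)
  · rw [if_pos h, if_pos (hiff.1 h), Finset.card_insert_of_notMem (by simp),
      Finset.card_insert_of_notMem (by simp [Finset.mem_Ico])]
  · rw [if_neg h, if_neg (fun h0 => h (hiff.2 h0))]

lemma F_shift (i t a : ℕ) :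
    (range (i+1)).filter (fun j => pp j ∣ PP i * t + a)
      = (range (i+1)).filter (fun j => pp j ∣ a) := by
  apply Finset.filter_congr
  intro j hj
  have h : pp j ∣ PP i * t := Dvd.dvd.mul_right (pp_dvd_PP hj) t
  simp [Nat.dvd_add_right h]


lemma card_split (i x : ℕ) :
    ((range (i+2)).filter (fun j => pp j ∣ x)).card
      = ((range (i+1)).filter (fun j => pp j ∣ x)).card
        + (if pp (i+1) ∣ x then 1 else 0) := by
  rw [Finset.range_add_one, Finset.filter_insert]
  by_cases h : pp (i+1) ∣ x
  · rw [if_pos h, if_pos h, Finset.card_insert_of_notMem (by simp)]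
  · simp [h]


lemma Mc_succ_aux (r i : ℕ) :
    Mc r (i + 1) = ∑ a ∈ range (PP i),
      ((range (pp (i+1))).filter
        (fun t => ((range (i+1)).filter (fun j => pp j ∣ a)).card
          + (if pp (i+1) ∣ PP i * t + a then 1 else 0) = r)).card := by
  rw [Mc, PP_succ, Finset.card_filter, sum_range_mul, Finset.sum_comm]
  apply Finset.sum_congr rfl
  intro a _
  rw [Finset.card_filter]
  apply Finset.sum_congr rfl
  intro t _
  have : (i + 1 + 1) = i + 2 := rfl
  rw [this, card_split i (PP i * t + a), F_shift]


lemma Mc_succ_zero (i : ℕ) : Mc 0 (i + 1) = (pp (i + 1) - 1) * Mc 0 i := by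
  rw [Mc_succ_aux]
  have : ∀ a ∈ range (PP i),
      ((range (pp (i+1))).filter
        (fun t => ((range (i+1)).filter (fun j => pp j ∣ a)).card
          + (if pp (i+1) ∣ PP i * t + a then 1 else 0) = 0)).card
      = if ((range (i+1)).filter (fun j => pp j ∣ a)).card = 0 then pp (i+1) - 1 else 0 := by
    intro a _
    by_cases hFa : ((range (i+1)).filter (fun j => pp j ∣ a)).card = 0
    · rw [if_pos hFa]
      rw [show ((range (pp (i+1))).filter
          (fun t => ((range (i+1)).filter (fun j => pp j ∣ a)).card
            + (if pp (i+1) ∣ PP i * t + a then 1 else 0) = 0))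
          = ((range (pp (i+1))).filter (fun t => ¬ pp (i+1) ∣ PP i * t + a)) from
        Finset.filter_congr (fun t _ => by
          by_cases h : pp (i+1) ∣ PP i * t + a <;> simp [h, hFa])]
      exact count_not_dvd (pp_prime (i+1)) _ _ (not_pp_succ_dvd_PP i)
    · rw [if_neg hFa, Finset.card_eq_zero, Finset.filter_eq_empty_iff]
      intro t _
      by_cases h : pp (i+1) ∣ PP i * t + a
      · simp only [if_pos h]; omega
      · simp only [if_neg h]; omega
  rw [Finset.sum_congr rfl this, ← Finset.sum_filter, Finset.sum_const, smul_eq_mul, Mc, mul_comm]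


lemma Mc_succ_one (i : ℕ) : Mc 1 (i + 1) = Mc 0 i + (pp (i + 1) - 1) * Mc 1 i := by
  rw [Mc_succ_aux]
  have : ∀ a ∈ range (PP i),
      ((range (pp (i+1))).filter
        (fun t => ((range (i+1)).filter (fun j => pp j ∣ a)).card
          + (if pp (i+1) ∣ PP i * t + a then 1 else 0) = 1)).card
      = (if ((range (i+1)).filter (fun j => pp j ∣ a)).card = 0 then 1 else 0)
        + (if ((range (i+1)).filter (fun j => pp j ∣ a)).card = 1 then pp (i+1) - 1 else 0) := by
    intro a _
    set F := ((range (i+1)).filter (fun j => pp j ∣ a)).card with hF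
    by_cases hF0 : F = 0
    · rw [if_pos hF0, if_neg (by omega)]
      rw [show ((range (pp (i+1))).filter
          (fun t => F + (if pp (i+1) ∣ PP i * t + a then 1 else 0) = 1))
          = ((range (pp (i+1))).filter (fun t => pp (i+1) ∣ PP i * t + a)) from
        Finset.filter_congr (fun t _ => by
          by_cases h : pp (i+1) ∣ PP i * t + a <;> simp [h, hF0])]
      rw [count_dvd (pp_prime (i+1)) _ _ (not_pp_succ_dvd_PP i)]
    · by_cases hF1 : F = 1
      · rw [if_neg hF0, if_pos hF1]
        rw [show ((range (pp (i+1))).filter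
            (fun t => F + (if pp (i+1) ∣ PP i * t + a then 1 else 0) = 1))
            = ((range (pp (i+1))).filter (fun t => ¬ pp (i+1) ∣ PP i * t + a)) from
          Finset.filter_congr (fun t _ => by
            by_cases h : pp (i+1) ∣ PP i * t + a <;> simp [h, hF1])]
        rw [count_not_dvd (pp_prime (i+1)) _ _ (not_pp_succ_dvd_PP i)]
        simp
      · rw [if_neg hF0, if_neg hF1, Finset.card_eq_zero, Finset.filter_eq_empty_iff]
        intro t _
        by_cases h : pp (i+1) ∣ PP i * t + a
        · simp only [if_pos h]; omega
        · simp only [if_neg h]; omega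
  rw [Finset.sum_congr rfl this, Finset.sum_add_distrib, ← Finset.sum_filter,
    ← Finset.sum_filter, Finset.sum_const, Finset.sum_const, smul_eq_mul, smul_eq_mul,
    Mc, Mc]
  ring


lemma Mc_zero_zero : Mc 0 0 = 1 := by
  rw [Mc, PP_zero]
  have : (range 2).filter
      (fun x => ((range 1).filter (fun j => pp j ∣ x)).card = 0) = {1} := by
    ext x
    simp [Finset.filter_singleton, Finset.range_one, pp_zero, Finset.mem_range]
    constructor
    · rintro ⟨hx, h⟩
      rcases (by omega : x = 0 ∨ x = 1) with rfl | rfl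
      · simp at h
      · rfl
    · rintro rfl
      refine ⟨by norm_num, by simp⟩
  rw [this, Finset.card_singleton]


lemma Mc_one_zero : Mc 1 0 = 1 := by
  rw [Mc, PP_zero]
  have : (range 2).filter
      (fun x => ((range 1).filter (fun j => pp j ∣ x)).card = 1) = {0} := by
    ext x
    simp [Finset.filter_singleton, Finset.range_one, pp_zero, Finset.mem_range]
    constructor
    · rintro ⟨hx, h⟩
      rcases (by omega : x = 0 ∨ x = 1) with rfl | rfl
      · rfl
      · simp at h
    · rintro rfl
      refine ⟨by norm_num, by simp⟩
  rw [this, Finset.card_singleton]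


lemma Mc_zero_le_one (i : ℕ) : Mc 0 i ≤ Mc 1 i := by
  induction i with
  | zero => rw [Mc_zero_zero, Mc_one_zero]
  | succ i ih =>
    rw [Mc_succ_zero, Mc_succ_one]
    calc (pp (i+1) - 1) * Mc 0 i ≤ (pp (i+1) - 1) * Mc 1 i :=
          Nat.mul_le_mul_left _ ih
      _ ≤ Mc 0 i + (pp (i+1) - 1) * Mc 1 i := Nat.le_add_left _ _

lemma del_eq (r i : ℕ) : del r i = (Mc r i : ℚ) / (PP i : ℚ) := by
  rw [del, N_eq_M]

/-- `δ_1(0) = δ_1(1) = 1/2`, and `(δ_1(i))_{i ≥ 0}` is non-increasing. -/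
theorem del_one_nonincreasing :
    del 1 0 = 1 / 2 ∧ del 1 1 = 1 / 2 ∧ ∀ i : ℕ, del 1 (i + 1) ≤ del 1 i := by
  have hPP0 : PP 0 = 2 := by simp [PP, pp_zero]
  have hPP1 : PP 1 = 6 := by rw [PP_succ, hPP0, pp_one]
  refine ⟨?_, ?_, ?_⟩
  · rw [del_eq, Mc_one_zero, hPP0]; norm_num
  · rw [del_eq, Mc_succ_one, Mc_zero_zero, Mc_one_zero, pp_one, hPP1]; norm_num
  · intro i
    rw [del_eq, del_eq, Mc_succ_one, PP_succ]
    have hq := pp_pos (i + 1)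
    have hP : (0:ℚ) < (PP i : ℚ) := by exact_mod_cast PP_pos i
    have hqq : (0:ℚ) < (pp (i+1) : ℚ) := by exact_mod_cast hq
    have hPq : (0:ℚ) < ((PP i * pp (i+1) : ℕ) : ℚ) := by
      exact_mod_cast Nat.mul_pos (PP_pos i) hq
    rw [div_le_div_iff₀ hPq hP]
    have key : Mc 0 i + (pp (i + 1) - 1) * Mc 1 i ≤ Mc 1 i * pp (i + 1) := by
      have h1 := Mc_zero_le_one i
      have h2 : Mc 1 i ≤ pp (i+1) * Mc 1 i := Nat.le_mul_of_pos_left _ hq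
      rw [Nat.sub_one_mul, mul_comm (Mc 1 i)]
      omega
    calc ((Mc 0 i + (pp (i + 1) - 1) * Mc 1 i : ℕ) : ℚ) * (PP i : ℚ)
        ≤ ((Mc 1 i * pp (i+1) : ℕ) : ℚ) * (PP i : ℚ) := by
          apply mul_le_mul_of_nonneg_right _ hP.le
          exact_mod_cast key
      _ = (Mc 1 i : ℚ) * ((PP i : ℚ) * (pp (i+1) : ℚ)) := by push_cast; ring
      _ = (Mc 1 i : ℚ) * ((PP i * pp (i+1) : ℕ) : ℚ) := by push_cast; ring
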